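/- Let X be a measurable space, n ∈ ℕ, ε ≥ 0 and δ ∈ [0,1]. An algorithm A (a Markov kernel from X^n to an output space Y) is (ε,δ)-differentially private — i.e., A(D)(S) ≤ e^ε A(D′)(S) + δ for all measurable S ⊆ Y and all adjacent D, D′ — if and only if A is f_{ε,δ}-DP, where f_{ε,δ}(α) = max{0, 1 − δ − e^ε α, e^{−ε}(1 − δ − α)}. -/

import Mathlib

open MeasureTheory ProbabilityTheory
open scoped ProbabilityTheory NNReal ENNReal

/-- The trade-off function `T(P,Q)(α) = inf {∫ (1-φ) dQ : φ a test with ∫ φ dP ≤ α}`,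
where a test is a measurable function with values in `[0,1]`. -/
noncomputable def tradeoff {Ω : Type*} [MeasurableSpace Ω] (P Q : Measure Ω) (α : ℝ) : ℝ :=
  sInf { r : ℝ | ∃ φ : Ω → ℝ, Measurable φ ∧ (∀ ω, 0 ≤ φ ω) ∧ (∀ ω, φ ω ≤ 1) ∧
    (∫ ω, φ ω ∂P) ≤ α ∧ r = ∫ ω, (1 - φ ω) ∂Q }

/-- Two datasets are adjacent if they differ in at most one coordinate. -/
def Adjacent {X : Type*} {n : ℕ} (D D' : Fin n → X) : Prop :=
  ∃ i : Fin n, ∀ j : Fin n, j ≠ i → D j = D' j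

/-- An algorithm (Markov kernel on datasets) is `f`-DP if `T(A(D), A(D')) ≥ f` on `[0,1]`
for every pair of adjacent datasets. -/
def fDP {X Y : Type*} [MeasurableSpace X] [MeasurableSpace Y] {n : ℕ}
    (A : Kernel (Fin n → X) Y) (f : ℝ → ℝ) : Prop :=
  ∀ D D' : Fin n → X, Adjacent D D' → ∀ α ∈ Set.Icc (0 : ℝ) 1, f α ≤ tradeoff (A D) (A D') α

/-- `A` is `(ε,δ)`-differentially private: `A(D)(S) ≤ e^ε A(D')(S) + δ` for all measurable
`S` and adjacent `D, D'`. -/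
def EpsDeltaDP {X Y : Type*} [MeasurableSpace X] [MeasurableSpace Y] {n : ℕ}
    (A : Kernel (Fin n → X) Y) (ε δ : ℝ) : Prop :=
  ∀ S : Set Y, MeasurableSet S → ∀ D D' : Fin n → X, Adjacent D D' →
    A D S ≤ ENNReal.ofReal (Real.exp ε) * A D' S + ENNReal.ofReal δ

/-- Integrability of a bounded test. -/
lemma test_integrable {Ω : Type*} [MeasurableSpace Ω] (μ : Measure Ω) [IsProbabilityMeasure μ]
    {φ : Ω → ℝ} (hm : Measurable φ) (h0 : ∀ ω, 0 ≤ φ ω) (h1 : ∀ ω, φ ω ≤ 1) :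
    Integrable φ μ := by
  refine (integrable_const (1 : ℝ)).mono' hm.aestronglyMeasurable ?_
  filter_upwards with ω
  rw [Real.norm_eq_abs, abs_of_nonneg (h0 ω)]
  exact h1 ω

/-- Key inequality: the set-level DP inequality implies the corresponding inequality
for integrals of tests (via the layer cake formula). -/
lemma test_dp_ineq {Ω : Type*} [MeasurableSpace Ω] (P Q : Measure Ω)
    [IsProbabilityMeasure P] [IsProbabilityMeasure Q] {ε δ : ℝ} (hδ : 0 ≤ δ)
    (h : ∀ S : Set Ω, MeasurableSet S →
      P S ≤ ENNReal.ofReal (Real.exp ε) * Q S + ENNReal.ofReal δ)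
    {φ : Ω → ℝ} (hm : Measurable φ) (h0 : ∀ ω, 0 ≤ φ ω) (h1 : ∀ ω, φ ω ≤ 1) :
    (∫ ω, φ ω ∂P) ≤ Real.exp ε * (∫ ω, φ ω ∂Q) + δ := by
  have hmQ : Measurable fun t : ℝ => Q {a | t < φ a} :=
    Antitone.measurable (fun _ _ hst => measure_mono (fun _ hx => lt_of_le_of_lt hst hx))
  -- restrict the layer cake integral to (0,1]
  have hsplit : ∀ (μ : Measure Ω),
      ∫⁻ t in Set.Ioi (0:ℝ), μ {a | t < φ a} = ∫⁻ t in Set.Ioc (0:ℝ) 1, μ {a | t < φ a} := by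
    intro μ
    rw [← Set.Ioc_union_Ioi_eq_Ioi (zero_le_one (α := ℝ)),
      lintegral_union measurableSet_Ioi (Set.Ioc_disjoint_Ioi le_rfl)]
    have : ∫⁻ t in Set.Ioi (1:ℝ), μ {a | t < φ a} = ∫⁻ _ in Set.Ioi (1:ℝ), (0:ℝ≥0∞) := by
      refine setLIntegral_congr_fun measurableSet_Ioi ?_
      intro t ht
      have : {a | t < φ a} = ∅ := by
        ext a; simp only [Set.mem_setOf_eq, Set.mem_empty_iff_false, iff_false, not_lt]
        exact (h1 a).trans ht.le
      simp [this]
    simp [this]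
  have hlayP := lintegral_eq_lintegral_meas_lt P (Filter.Eventually.of_forall h0) hm.aemeasurable
  have hlayQ := lintegral_eq_lintegral_meas_lt Q (Filter.Eventually.of_forall h0) hm.aemeasurable
  have hbound : ∫⁻ ω, ENNReal.ofReal (φ ω) ∂P ≤
      ENNReal.ofReal (Real.exp ε) * (∫⁻ ω, ENNReal.ofReal (φ ω) ∂Q) + ENNReal.ofReal δ := by
    rw [hlayP, hlayQ, hsplit P, hsplit Q]
    calc ∫⁻ t in Set.Ioc (0:ℝ) 1, P {a | t < φ a}
        ≤ ∫⁻ t in Set.Ioc (0:ℝ) 1,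
            (ENNReal.ofReal (Real.exp ε) * Q {a | t < φ a} + ENNReal.ofReal δ) := by
          refine lintegral_mono fun t => h _ (measurableSet_lt measurable_const hm)
      _ = ENNReal.ofReal (Real.exp ε) * (∫⁻ t in Set.Ioc (0:ℝ) 1, Q {a | t < φ a})
            + ENNReal.ofReal δ := by
          rw [lintegral_add_right _ measurable_const, lintegral_const_mul _ hmQ,
            lintegral_const, Measure.restrict_apply_univ, Real.volume_Ioc]
          norm_num
  -- convert back to real integrals
  have hPfin : ∫⁻ ω, ENNReal.ofReal (φ ω) ∂P ≠ ⊤ :=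
    ((test_integrable P hm h0 h1).lintegral_lt_top).ne
  have hQfin : ∫⁻ ω, ENNReal.ofReal (φ ω) ∂Q ≠ ⊤ :=
    ((test_integrable Q hm h0 h1).lintegral_lt_top).ne
  have hiP := integral_eq_lintegral_of_nonneg_ae (μ := P)
    (Filter.Eventually.of_forall h0) hm.aestronglyMeasurable
  have hiQ := integral_eq_lintegral_of_nonneg_ae (μ := Q)
    (Filter.Eventually.of_forall h0) hm.aestronglyMeasurable
  rw [hiP, hiQ]
  have := ENNReal.toReal_mono (by
      refine ENNReal.add_ne_top.mpr ⟨?_, ENNReal.ofReal_ne_top⟩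
      exact ENNReal.mul_ne_top ENNReal.ofReal_ne_top hQfin) hbound
  rwa [ENNReal.toReal_add (ENNReal.mul_ne_top ENNReal.ofReal_ne_top hQfin) ENNReal.ofReal_ne_top,
    ENNReal.toReal_mul, ENNReal.toReal_ofReal (Real.exp_pos ε).le,
    ENNReal.toReal_ofReal hδ] at this

/-- `(ε,δ)`-DP is equivalent to `f_{ε,δ}`-DP, where
`f_{ε,δ}(α) = max {0, 1 − δ − e^ε α, e^{−ε}(1 − δ − α)}`. -/
theorem epsDeltaDP_iff_fDP {X Y : Type*} [MeasurableSpace X] [MeasurableSpace Y] {n : ℕ}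
    (ε δ : ℝ) (hε : 0 ≤ ε) (hδ : δ ∈ Set.Icc (0 : ℝ) 1)
    (A : Kernel (Fin n → X) Y) [IsMarkovKernel A] :
    EpsDeltaDP A ε δ ↔
      fDP A (fun α => max 0 (max (1 - δ - Real.exp ε * α)
        (Real.exp (-ε) * (1 - δ - α)))) := by
  obtain ⟨hδ0, hδ1⟩ := hδ
  constructor
  · intro hDP D D' hadj α hα
    obtain ⟨hα0, hα1⟩ := hα
    have hadj' : Adjacent D' D := by
      obtain ⟨i, hi⟩ := hadj; exact ⟨i, fun j hj => (hi j hj).symm⟩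
    have hPQ : ∀ S : Set Y, MeasurableSet S →
        A D S ≤ ENNReal.ofReal (Real.exp ε) * A D' S + ENNReal.ofReal δ :=
      fun S hS => hDP S hS D D' hadj
    have hQP : ∀ S : Set Y, MeasurableSet S →
        A D' S ≤ ENNReal.ofReal (Real.exp ε) * A D S + ENNReal.ofReal δ :=
      fun S hS => hDP S hS D' D hadj'
    refine le_csInf ⟨∫ ω, (1 - (fun _ : Y => α) ω) ∂(A D'), (fun _ => α), measurable_const,
      fun _ => hα0, fun _ => hα1, by simp, rfl⟩ ?_
    rintro b ⟨φ, hm, h0, h1, hint, rfl⟩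
    have intP := test_integrable (A D) hm h0 h1
    have intQ := test_integrable (A D') hm h0 h1
    have e1 : (∫ ω, (1 - φ ω) ∂(A D')) = 1 - ∫ ω, φ ω ∂(A D') := by
      rw [integral_sub (integrable_const 1) intQ]; simp
    have e2 : (∫ ω, (1 - φ ω) ∂(A D)) = 1 - ∫ ω, φ ω ∂(A D) := by
      rw [integral_sub (integrable_const 1) intP]; simp
    have hnn : (0:ℝ) ≤ ∫ ω, (1 - φ ω) ∂(A D') :=
      integral_nonneg fun ω => show (0:ℝ) ≤ 1 - _ by linarith [h1 ω]
    refine max_le hnn (max_le ?_ ?_)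
    · -- use Q(S) ≤ e^ε P(S) + δ on φ
      have := test_dp_ineq (A D') (A D) hδ0 hQP hm h0 h1
      have hmul : Real.exp ε * (∫ ω, φ ω ∂(A D)) ≤ Real.exp ε * α :=
        mul_le_mul_of_nonneg_left hint (Real.exp_pos ε).le
      rw [e1]; linarith
    · -- use P(S) ≤ e^ε Q(S) + δ on 1 - φ
      have := test_dp_ineq (A D) (A D') hδ0 hPQ
        (φ := fun ω => 1 - φ ω) (by fun_prop)
        (fun ω => show (0:ℝ) ≤ 1 - _ by linarith [h1 ω]) (fun ω => show 1 - _ ≤ (1:ℝ) by linarith [h0 ω])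
      rw [e2] at this
      rw [Real.exp_neg, inv_mul_le_iff₀ (Real.exp_pos ε)]
      linarith
  · intro hf S hS D D' hadj
    have hT := hf D D' hadj
    set p : ℝ := ((A D) S).toReal with hp
    have hSle : (A D) S ≤ 1 := prob_le_one
    have hp0 : 0 ≤ p := ENNReal.toReal_nonneg
    have hp1 : p ≤ 1 := by
      rw [hp]; exact ENNReal.toReal_le_of_le_ofReal zero_le_one (by simpa using hSle)
    have hcompl : ((A D) Sᶜ).toReal = 1 - p := by
      rw [prob_compl_eq_one_sub hS, ENNReal.toReal_sub_of_le hSle (by simp)]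
      simp [hp]
    -- the test: indicator of Sᶜ
    set φ : Y → ℝ := Sᶜ.indicator (fun _ => 1) with hφ
    have hmφ : Measurable φ := measurable_const.indicator hS.compl
    have h0φ : ∀ ω, 0 ≤ φ ω := fun ω => Set.indicator_nonneg (fun _ _ => zero_le_one) ω
    have h1φ : ∀ ω, φ ω ≤ 1 := fun ω => by
      by_cases h : ω ∈ Sᶜ <;> simp [hφ, Set.indicator, h]
    have hintP : (∫ ω, φ ω ∂(A D)) = 1 - p := by
      rw [hφ, integral_indicator_const (1:ℝ) hS.compl, smul_eq_mul, mul_one, measureReal_def, hcompl]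
    have hintQ : (∫ ω, (1 - φ ω) ∂(A D')) = ((A D') S).toReal := by
      have : (fun ω => 1 - φ ω) = S.indicator (fun _ => (1:ℝ)) := by
        funext ω
        by_cases h : ω ∈ S <;> simp [hφ, Set.indicator, h]
      rw [this, integral_indicator_const (1:ℝ) hS, smul_eq_mul, mul_one, measureReal_def]
    have hmem : ((A D') S).toReal ∈ { r : ℝ | ∃ φ : Y → ℝ, Measurable φ ∧ (∀ ω, 0 ≤ φ ω) ∧
        (∀ ω, φ ω ≤ 1) ∧ (∫ ω, φ ω ∂(A D)) ≤ (1 - p) ∧ r = ∫ ω, (1 - φ ω) ∂(A D') } :=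
      ⟨φ, hmφ, h0φ, h1φ, hintP.le, hintQ.symm⟩
    have hbdd : BddBelow { r : ℝ | ∃ φ : Y → ℝ, Measurable φ ∧ (∀ ω, 0 ≤ φ ω) ∧
        (∀ ω, φ ω ≤ 1) ∧ (∫ ω, φ ω ∂(A D)) ≤ (1 - p) ∧ r = ∫ ω, (1 - φ ω) ∂(A D') } := by
      refine ⟨0, ?_⟩
      rintro r ⟨ψ, hmψ, h0ψ, h1ψ, _, rfl⟩
      exact integral_nonneg fun ω => show (0:ℝ) ≤ 1 - _ by linarith [h1ψ ω]
    have hle : tradeoff (A D) (A D') (1 - p) ≤ ((A D') S).toReal := csInf_le hbdd hmem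
    have hTα := hT (1 - p) ⟨by linarith, by linarith⟩
    have key : Real.exp (-ε) * (p - δ) ≤ ((A D') S).toReal := by
      have h2 : Real.exp (-ε) * (1 - δ - (1 - p)) ≤ tradeoff (A D) (A D') (1 - p) :=
        le_trans (le_max_right _ _) (le_trans (le_max_right _ _) hTα)
      calc Real.exp (-ε) * (p - δ) = Real.exp (-ε) * (1 - δ - (1 - p)) := by ring_nf
        _ ≤ _ := le_trans h2 hle
    have hq : p ≤ Real.exp ε * ((A D') S).toReal + δ := by
      rw [Real.exp_neg, inv_mul_le_iff₀ (Real.exp_pos ε)] at key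
      · linarith [key]
    have : (A D) S = ENNReal.ofReal p := by
      rw [hp, ENNReal.ofReal_toReal (lt_of_le_of_lt hSle (by simp)).ne]
    rw [this]
    calc ENNReal.ofReal p ≤ ENNReal.ofReal (Real.exp ε * ((A D') S).toReal + δ) :=
          ENNReal.ofReal_le_ofReal hq
      _ ≤ ENNReal.ofReal (Real.exp ε) * A D' S + ENNReal.ofReal δ := by
          rw [ENNReal.ofReal_add (by positivity) hδ0,
            ENNReal.ofReal_mul (Real.exp_pos ε).le,
            ENNReal.ofReal_toReal (measure_ne_top _ _)]
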